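/- For every k ≥ 1 there exists a natural number N such that no word of length greater than N over a k-letter alphabet satisfies property (*); equivalently, the quantity n(k), the length of a longest word over a k-letter alphabet satisfying (*), is well-defined (finite) for every k. -/

import Mathlib

/-- `friedmanBlock s i` is the block `s_i s_{i+1} … s_{2i}` of the word `s`
(1-based indices); it has length `i + 1` when `2*i ≤ s.length`. -/
def friedmanBlock {α : Type} (s : List α) (i : ℕ) : List α :=
  (s.drop (i - 1)).take (i + 1)

/-- Friedman's property (*): there are no indices `1 ≤ i < j ≤ n/2` such that
`s^(i)` is a (scattered) subword of `s^(j)`.  Note `j ≤ n/2 ↔ 2*j ≤ n`. -/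
def SatisfiesStar {α : Type} (s : List α) : Prop :=
  ∀ i j : ℕ, 1 ≤ i → i < j → 2 * j ≤ s.length →
    ¬ (friedmanBlock s i).Sublist (friedmanBlock s j)

/-- `friedmanN k` = n(k), the length of a longest word over a `k`-letter
alphabet satisfying (*). -/
noncomputable def friedmanN (k : ℕ) : ℕ :=
  sSup {n : ℕ | ∃ s : List (Fin k), s.length = n ∧ SatisfiesStar s}

/- ### Auxiliary lemmas -/

lemma drop_take_of_prefix {α : Type} {s t : List α} (h : s <+: t) {n m : ℕ}
    (hnm : n + m ≤ s.length) : (s.drop n).take m = (t.drop n).take m := by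
  obtain ⟨r, rfl⟩ := h
  rw [List.drop_append_of_le_length (by omega), List.take_append_of_le_length]
  simp only [List.length_drop]; omega

lemma friedmanBlock_prefix {α : Type} {s t : List α} (h : s <+: t) {i : ℕ} (hi : 1 ≤ i)
    (h2 : 2 * i ≤ s.length) : friedmanBlock s i = friedmanBlock t i := by
  unfold friedmanBlock
  exact drop_take_of_prefix h (by omega)

lemma satisfiesStar_of_prefix {α : Type} {s t : List α} (h : s <+: t)
    (ht : SatisfiesStar t) : SatisfiesStar s := by
  intro i j hi hij h2j hsub
  have h2i : 2 * i ≤ s.length := by omega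
  rw [friedmanBlock_prefix h hi h2i, friedmanBlock_prefix h (by omega) h2j] at hsub
  exact ht i j hi hij (le_trans h2j h.length_le) hsub

/-- `FGood k s`: `s` has arbitrarily long extensions satisfying (*). -/
def FGood (k : ℕ) (s : List (Fin k)) : Prop :=
  ∀ n : ℕ, ∃ t : List (Fin k), s <+: t ∧ SatisfiesStar t ∧ n ≤ t.length

/-- An infinite chain of good words, each extending the previous by one letter. -/
noncomputable def friedmanChain (k : ℕ)
    (step : ∀ s : List (Fin k), FGood k s → {a : Fin k // FGood k (s ++ [a])})
    (h0 : FGood k []) : ℕ → {s : List (Fin k) // FGood k s}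
  | 0 => ⟨[], h0⟩
  | n + 1 =>
    let p := friedmanChain k step h0 n
    ⟨p.1 ++ [(step p.1 p.2).1], (step p.1 p.2).2⟩

lemma friedmanChain_length (k : ℕ) (step) (h0) (n : ℕ) :
    (friedmanChain k step h0 n).1.length = n := by
  induction n with
  | zero => rfl
  | succ n ih => simp [friedmanChain, ih]

lemma friedmanChain_prefix (k : ℕ) (step) (h0) {m n : ℕ} (h : m ≤ n) :
    (friedmanChain k step h0 m).1 <+: (friedmanChain k step h0 n).1 := by
  induction n with
  | zero => obtain rfl : m = 0 := Nat.le_zero.mp h; exact List.prefix_refl _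
  | succ n ih =>
    rcases Nat.lt_or_ge m (n + 1) with h' | h'
    · exact (ih (by omega)).trans ⟨_, rfl⟩
    · obtain rfl : m = n + 1 := by omega
      exact List.prefix_refl _

lemma friedmanChain_star (k : ℕ) (step) (h0) (n : ℕ) :
    SatisfiesStar (friedmanChain k step h0 n).1 := by
  obtain ⟨t, hpre, hstar, -⟩ := (friedmanChain k step h0 n).2 0
  exact satisfiesStar_of_prefix hpre hstar

/-- For every `k ≥ 1` there is a bound `N` such that no word over a `k`-letter
alphabet of length greater than `N` satisfies (*); i.e. n(k) is finite. -/
theorem friedman_n_well_defined :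
    ∀ k : ℕ, 1 ≤ k → ∃ N : ℕ, ∀ s : List (Fin k), N < s.length → ¬ SatisfiesStar s := by
  intro k hk
  by_contra hcon
  push_neg at hcon
  have H : ∀ N : ℕ, ∃ s : List (Fin k), N < s.length ∧ SatisfiesStar s := hcon
  -- the empty word is good
  have h0 : FGood k [] := by
    intro n
    obtain ⟨s, hs, hstar⟩ := H n
    exact ⟨s, List.nil_prefix, hstar, hs.le⟩
  -- every good word has a good one-letter extension
  have hstep : ∀ s : List (Fin k), FGood k s → ∃ a : Fin k, FGood k (s ++ [a]) := by
    intro s hs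
    by_contra hbad
    push_neg at hbad
    simp only [FGood, not_forall, not_exists, not_and, not_le] at hbad
    choose nb hnb using hbad
    have hne : (Finset.univ : Finset (Fin k)).Nonempty := by
      have : Nonempty (Fin k) := ⟨⟨0, hk⟩⟩
      exact Finset.univ_nonempty
    set N := Finset.univ.sup nb with hN
    obtain ⟨t, hpre, hstar, hlen⟩ := hs (max N (s.length + 1))
    obtain ⟨r, rfl⟩ := hpre
    have hr : r ≠ [] := by
      intro h; subst h; simp only [List.append_nil] at hlen; omega
    obtain ⟨a, r', rfl⟩ := List.exists_cons_of_ne_nil hr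
    have hpre2 : s ++ [a] <+: s ++ a :: r' := ⟨r', by simp⟩
    have := hnb a _ hpre2 hstar
    have hle : nb a ≤ N := Finset.le_sup (Finset.mem_univ a)
    omega
  -- build the infinite chain
  choose step hstepspec using hstep
  let stp : ∀ s : List (Fin k), FGood k s → {a : Fin k // FGood k (s ++ [a])} :=
    fun s hs => ⟨step s hs, hstepspec s hs⟩
  let c : ℕ → List (Fin k) := fun n => (friedmanChain k stp h0 n).1
  -- the bad sequence of blocks
  let b : ℕ → List (Fin k) := fun i => friedmanBlock (c (2 * i + 2)) (i + 1)
  -- Higman's lemma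
  have hpwo : (Set.univ : Set (Fin k)).PartiallyWellOrderedOn (· = ·) :=
    Set.finite_univ.partiallyWellOrderedOn
  have higman := hpwo.partiallyWellOrderedOn_sublistForall₂ (· = ·)
  obtain ⟨m, n, hmn, hsub⟩ := higman.exists_lt (f := b) (fun n _ _ => Set.mem_univ _)
  rw [List.sublistForall₂_iff] at hsub
  obtain ⟨l, hfor, hsubl⟩ := hsub
  have hbm : b m = l := by
    rw [← List.forall₂_eq_eq_eq]; exact hfor
  subst hbm
  -- contradiction with (*) for the word c (2*n+2)
  have hclen : ∀ i, (c i).length = i := fun i => friedmanChain_length k stp h0 i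
  have hcpre : c (2 * m + 2) <+: c (2 * n + 2) :=
    friedmanChain_prefix k stp h0 (by omega)
  have hbm' : b m = friedmanBlock (c (2 * n + 2)) (m + 1) := by
    show friedmanBlock (c (2 * m + 2)) (m + 1) = _
    exact friedmanBlock_prefix hcpre (by omega) (by rw [hclen]; omega)
  have hstar := friedmanChain_star k stp h0 (2 * n + 2)
  exact hstar (m + 1) (n + 1) (by omega) (by omega) (by rw [hclen]; omega) (hbm' ▸ hsubl)
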